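/- Let f : [a,b] → ℝ with 0 < a < b be continuous on [a,b] and differentiable on (a,b), and suppose |t·f'(t)| ≤ P for all t ∈ (a,b). Then for any x ∈ (a,b): |f(x) - (1/(b-a))∫_a^b f(t) dt| ≤ (P/(b-a))·[ (b-x)ln I(x,b) - (x-a)ln I(a,x) + 2(x - (a+b)/2) ln x ], where ln I(u,v) = (v·ln v - u·ln u)/(v-u) - 1 is the logarithm of the identric mean. -/

import Mathlib

open Real Set intervalIntegral

theorem ostrowski_identric (a b : ℝ) (ha : 0 < a) (hab : a < b) (f f' : ℝ → ℝ) (P : ℝ)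
    (hfc : ContinuousOn f (Set.Icc a b))
    (hf' : ∀ t ∈ Set.Ioo a b, HasDerivAt f (f' t) t)
    (hP : ∀ t ∈ Set.Ioo a b, |t * f' t| ≤ P)
    (x : ℝ) (hx : x ∈ Set.Ioo a b) :
    |f x - (1 / (b - a)) * ∫ t in a..b, f t| ≤
      (P / (b - a)) *
        ((b - x) * ((b * Real.log b - x * Real.log x) / (b - x) - 1) -
          (x - a) * ((x * Real.log x - a * Real.log a) / (x - a) - 1) +
          2 * (x - (a + b) / 2) * Real.log x) := by
  obtain ⟨hax, hxb⟩ := hx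
  have hx0 : 0 < x := ha.trans hax
  have hb0 : 0 < b := hx0.trans hxb
  have hba : (0:ℝ) < b - a := sub_pos.2 hab
  have hP0 : 0 ≤ P := (abs_nonneg _).trans (hP x ⟨hax, hxb⟩)
  have hlogc : ContinuousOn Real.log (Icc a b) :=
    Real.continuousOn_log.mono fun t ht => by
      simp only [mem_compl_iff, mem_singleton_iff]
      exact ne_of_gt (lt_of_lt_of_le ha ht.1)
  -- monotonicity helper
  have mono : ∀ (g g' : ℝ → ℝ), ContinuousOn g (Icc a b) →
      (∀ t ∈ Ioo a b, HasDerivAt g (g' t) t) → (∀ t ∈ Ioo a b, 0 ≤ g' t) →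
      MonotoneOn g (Icc a b) := by
    intro g g' hc hd h0
    apply monotoneOn_of_deriv_nonneg (convex_Icc a b) hc
    · rw [interior_Icc]
      exact fun t ht => (hd t ht).differentiableAt.differentiableWithinAt
    · rw [interior_Icc]
      intro t ht
      rw [(hd t ht).deriv]
      exact h0 t ht
  have hfle : ∀ t ∈ Ioo a b, f' t ≤ P / t := by
    intro t ht
    have ht0 : 0 < t := ha.trans ht.1
    have h1 : t * f' t ≤ P := (le_abs_self _).trans (hP t ht)
    rw [le_div_iff₀ ht0]
    linarith [mul_comm t (f' t)]
  have hfge : ∀ t ∈ Ioo a b, -(P / t) ≤ f' t := by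
    intro t ht
    have ht0 : 0 < t := ha.trans ht.1
    have h1 : -P ≤ t * f' t := neg_le_of_abs_le (hP t ht)
    have h2 : -f' t ≤ P / t := by rw [le_div_iff₀ ht0]; nlinarith
    linarith
  have m1 : MonotoneOn (fun t => P * Real.log t - f t) (Icc a b) := by
    apply mono _ (fun t => P / t - f' t)
    · exact (continuousOn_const.mul hlogc).sub hfc
    · intro t ht
      have ht0 : t ≠ 0 := ne_of_gt (ha.trans ht.1)
      have h1 : HasDerivAt (fun t => P * Real.log t) (P * t⁻¹) t :=
        (Real.hasDerivAt_log ht0).const_mul P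
      have := h1.sub (hf' t ht)
      simp only [div_eq_mul_inv]
      exact this
    · intro t ht
      have := hfle t ht
      linarith
  have m2 : MonotoneOn (fun t => P * Real.log t + f t) (Icc a b) := by
    apply mono _ (fun t => P / t + f' t)
    · exact (continuousOn_const.mul hlogc).add hfc
    · intro t ht
      have ht0 : t ≠ 0 := ne_of_gt (ha.trans ht.1)
      have h1 : HasDerivAt (fun t => P * Real.log t) (P * t⁻¹) t :=
        (Real.hasDerivAt_log ht0).const_mul P
      have := h1.add (hf' t ht)
      simp only [div_eq_mul_inv]
      exact this
    · intro t ht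
      have := hfge t ht
      linarith
  have hxm : x ∈ Icc a b := ⟨hax.le, hxb.le⟩
  have key : ∀ t ∈ Icc a b, |f x - f t| ≤ P * |Real.log x - Real.log t| := by
    intro t ht
    have ht0 : 0 < t := lt_of_lt_of_le ha ht.1
    rcases le_total t x with h | h
    · have hlog : Real.log t ≤ Real.log x := Real.log_le_log ht0 h
      rw [abs_of_nonneg (sub_nonneg.2 hlog), abs_le, mul_sub]
      have h1 := m1 ht hxm h
      have h2 := m2 ht hxm h
      simp only at h1 h2
      constructor <;> linarith
    · have hlog : Real.log x ≤ Real.log t := Real.log_le_log hx0 h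
      rw [abs_sub_comm (Real.log x), abs_of_nonneg (sub_nonneg.2 hlog), abs_le, mul_sub]
      have h1 := m1 hxm ht h
      have h2 := m2 hxm ht h
      simp only at h1 h2
      constructor <;> linarith
  -- integrability
  have hfi : IntervalIntegrable f MeasureTheory.volume a b :=
    (hfc.mono (by rw [uIcc_of_le hab.le])).intervalIntegrable
  have hgc : ContinuousOn (fun t => P * |Real.log x - Real.log t|) (Icc a b) :=
    continuousOn_const.mul ((continuousOn_const.sub hlogc).abs)
  have hgiab : IntervalIntegrable (fun t => P * |Real.log x - Real.log t|)
      MeasureTheory.volume a b :=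
    (hgc.mono (by rw [uIcc_of_le hab.le])).intervalIntegrable
  have hgiax : IntervalIntegrable (fun t => P * |Real.log x - Real.log t|)
      MeasureTheory.volume a x :=
    (hgc.mono (by rw [uIcc_of_le hax.le]; exact Icc_subset_Icc le_rfl hxb.le)).intervalIntegrable
  have hgixb : IntervalIntegrable (fun t => P * |Real.log x - Real.log t|)
      MeasureTheory.volume x b :=
    (hgc.mono (by rw [uIcc_of_le hxb.le]; exact Icc_subset_Icc hax.le le_rfl)).intervalIntegrable
  have habsfi : IntervalIntegrable (fun t => |f x - f t|) MeasureTheory.volume a b :=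
    (((continuousOn_const.sub hfc).abs).mono (by rw [uIcc_of_le hab.le])).intervalIntegrable
  have hliax : IntervalIntegrable Real.log MeasureTheory.volume a x :=
    (hlogc.mono (by rw [uIcc_of_le hax.le]; exact Icc_subset_Icc le_rfl hxb.le)).intervalIntegrable
  have hlixb : IntervalIntegrable Real.log MeasureTheory.volume x b :=
    (hlogc.mono (by rw [uIcc_of_le hxb.le]; exact Icc_subset_Icc hax.le le_rfl)).intervalIntegrable
  -- rewrite the LHS
  have h1 : f x - (1 / (b - a)) * ∫ t in a..b, f t
      = (1 / (b - a)) * ∫ t in a..b, (f x - f t) := by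
    rw [intervalIntegral.integral_sub intervalIntegrable_const hfi,
      intervalIntegral.integral_const, smul_eq_mul]
    field_simp
  -- main estimate
  have h2 : |∫ t in a..b, (f x - f t)| ≤ ∫ t in a..b, P * |Real.log x - Real.log t| := by
    calc |∫ t in a..b, (f x - f t)| ≤ ∫ t in a..b, |f x - f t| := by
          simpa [Real.norm_eq_abs] using
            intervalIntegral.norm_integral_le_integral_norm (f := fun t => f x - f t)
              (a := a) (b := b) (μ := MeasureTheory.volume) hab.le
      _ ≤ ∫ t in a..b, P * |Real.log x - Real.log t| :=
          intervalIntegral.integral_mono_on hab.le habsfi hgiab key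
  -- compute the integrals
  have e1 : ∫ t in a..x, P * |Real.log x - Real.log t|
      = P * ((x - a) * Real.log x - (x * Real.log x - a * Real.log a - x + a)) := by
    rw [intervalIntegral.integral_const_mul]
    congr 1
    rw [intervalIntegral.integral_congr (g := fun t => Real.log x - Real.log t)
      (fun t ht => by
        rw [uIcc_of_le hax.le] at ht
        exact abs_of_nonneg (sub_nonneg.2 (Real.log_le_log (lt_of_lt_of_le ha ht.1) ht.2)))]
    rw [intervalIntegral.integral_sub intervalIntegrable_const hliax,
      intervalIntegral.integral_const, smul_eq_mul,
      integral_log]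
  have e2 : ∫ t in x..b, P * |Real.log x - Real.log t|
      = P * ((b * Real.log b - x * Real.log x - b + x) - (b - x) * Real.log x) := by
    rw [intervalIntegral.integral_const_mul]
    congr 1
    rw [intervalIntegral.integral_congr (g := fun t => Real.log t - Real.log x)
      (fun t ht => by
        rw [uIcc_of_le hxb.le] at ht
        rw [abs_sub_comm]
        exact abs_of_nonneg (sub_nonneg.2 (Real.log_le_log hx0 ht.1)))]
    rw [intervalIntegral.integral_sub hlixb intervalIntegrable_const,
      intervalIntegral.integral_const, smul_eq_mul,
      integral_log]
  have hsplit : (∫ t in a..b, P * |Real.log x - Real.log t|)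
      = P * ((x - a) * Real.log x - (x * Real.log x - a * Real.log a - x + a))
        + P * ((b * Real.log b - x * Real.log x - b + x) - (b - x) * Real.log x) := by
    rw [← e1, ← e2, intervalIntegral.integral_add_adjacent_intervals hgiax hgixb]
  -- finish
  rw [h1, abs_mul, abs_of_nonneg (by positivity : (0:ℝ) ≤ 1 / (b - a))]
  have := mul_le_mul_of_nonneg_left h2 (by positivity : (0:ℝ) ≤ 1 / (b - a))
  refine this.trans (le_of_eq ?_)
  rw [hsplit]
  have hbx : b - x ≠ 0 := ne_of_gt (sub_pos.2 hxb)
  have hxa : x - a ≠ 0 := ne_of_gt (sub_pos.2 hax)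
  field_simp
  ring
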